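/- arXiv:0910.2132 — 9 statements merged into one kernel-verified Lean document; each statement's English description precedes it below -/
import Mathlib

section
/- If M is an ord-absolute model (i.e., ω^M = ω, ω ⊆ M, and every element of M that M thinks is an ordinal is really an ordinal), then the ord-collapse map i = ordcol^M, defined by i(x) = x if x is an ordinal and i(x) = {i(t) : t ∈ x ∩ M} otherwise, is an ∈-isomorphism from M onto its image M' = ordcol(M). -/
namespace NepPaper

/-- `x` is a (von Neumann) ordinal. -/
def IsOrd (x : ZFSet) : Prop := x.IsOrdinal

/-- `M` believes that `x` is an ordinal: the Δ₀ formula "x is transitive and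
∈-trichotomous" relativized to `M` (all quantifiers range over `M`). -/
def OrdIn (M x : ZFSet) : Prop :=
  (∀ y ∈ M, y ∈ x → ∀ z ∈ M, z ∈ y → z ∈ x) ∧
  (∀ y ∈ M, ∀ z ∈ M, y ∈ x → z ∈ x → y ∈ z ∨ y = z ∨ z ∈ y)

/-- `M` satisfies the extensionality axiom. -/
def Extensional (M : ZFSet) : Prop :=
  ∀ x ∈ M, ∀ y ∈ M, (∀ z ∈ M, z ∈ x ↔ z ∈ y) → x = y

/-- A (sufficient) fragment of ZFC*, relativized to `M`: extensionality,
empty set, pairing, union and set difference. -/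
def ZFCfrag (M : ZFSet) : Prop :=
  Extensional M ∧
  (∃ e ∈ M, ∀ z ∈ M, z ∉ e) ∧
  (∀ x ∈ M, ∀ y ∈ M, ∃ u ∈ M, ∀ z ∈ M, (z ∈ u ↔ (z = x ∨ z = y))) ∧
  (∀ x ∈ M, ∀ y ∈ M, ∃ u ∈ M, ∀ z ∈ M, (z ∈ u ↔ (z ∈ x ∨ z ∈ y))) ∧
  (∀ x ∈ M, ∀ y ∈ M, ∃ u ∈ M, ∀ z ∈ M, (z ∈ u ↔ (z ∈ x ∧ z ∉ y)))

/-- `M` believes that `y` is the set ω (the least inductive set), relativized to `M`. -/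
def OmegaIn (M y : ZFSet) : Prop :=
  OrdIn M y ∧ (∅ : ZFSet) ∈ y ∧ (∀ z ∈ M, z ∈ y → insert z z ∈ y) ∧
  ∀ w ∈ M, ((∅ : ZFSet) ∈ w ∧ ∀ z ∈ M, z ∈ w → insert z z ∈ w) →
    ∀ z ∈ M, z ∈ y → z ∈ w

/-- `M` is ord-absolute: it is a model (of a sufficient fragment of ZFC),
ω^M = ω, ω ⊆ M, and ON^M ⊆ ON. -/
def OrdAbsolute (M : ZFSet) : Prop :=
  ZFCfrag M ∧ ZFSet.omega ∈ M ∧ OmegaIn M ZFSet.omega ∧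
  (∀ n ∈ ZFSet.omega, n ∈ M) ∧ (∀ x ∈ M, OrdIn M x → IsOrd x)

/-- `M` is ord-transitive: ord-absolute, and every non-ordinal element is a subset. -/
def OrdTransitive (M : ZFSet) : Prop :=
  OrdAbsolute M ∧ ∀ x ∈ M, ¬ IsOrd x → ∀ t ∈ x, t ∈ M

/-- `i` is the ord-collapse of `M`: `i x = x` for ordinals `x`, and
`i x = {i t : t ∈ x ∩ M}` otherwise.  (This recursion on ∈ has a unique solution.) -/
def OrdcolChar (M : ZFSet) (i : ZFSet → ZFSet) : Prop :=
  (∀ x : ZFSet, IsOrd x → i x = x) ∧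
  (∀ x : ZFSet, ¬ IsOrd x → ∀ z : ZFSet, (z ∈ i x ↔ ∃ t ∈ x, t ∈ M ∧ i t = z))

/-- `j` is the transitive (Mostowski) collapse of `M`:
`j x = {j t : t ∈ x ∩ M}` for all `x`. -/
def CollapseChar (M : ZFSet) (j : ZFSet → ZFSet) : Prop :=
  ∀ x z : ZFSet, z ∈ j x ↔ ∃ t ∈ x, t ∈ M ∧ j t = z



lemma isOrd_of_mem {s x : ZFSet} (hs : s.IsOrdinal) (hx : x ∈ s) : x.IsOrdinal := by
  constructor
  · intro y hy z hz
    exact hs.mem_trans' hz hy hx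
  · intro y z w hyz hzw hwx
    exact hs.mem_trans' hyz hzw (hs.isTransitive.mem_trans hwx hx)

lemma ord_tri (a : ZFSet) : ∀ b : ZFSet, a.IsOrdinal → b.IsOrdinal →
    a ∈ b ∨ a = b ∨ b ∈ a := by
  induction a using ZFSet.mem_wf.induction with
  | _ a IHa =>
    intro b
    induction b using ZFSet.mem_wf.induction with
    | _ b IHb =>
      intro ha hb
      by_cases hba : b ∈ a
      · exact Or.inr (Or.inr hba)
      by_cases hab : a ∈ b
      · exact Or.inl hab
      have hsub1 : a ⊆ b := by
        intro t ht
        rcases IHa t ht b (isOrd_of_mem ha ht) hb with h | rfl | h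
        · exact h
        · exact absurd ht hba
        · exact absurd (ha.mem_trans h ht) hba
      have hsub2 : b ⊆ a := by
        intro t ht
        rcases IHb t ht ha (isOrd_of_mem hb ht) with h | rfl | h
        · exact absurd (hb.mem_trans h ht) hab
        · exact absurd ht hab
        · exact h
      exact Or.inr (Or.inl (ZFSet.ext fun z => ⟨fun h => hsub1 h, fun h => hsub2 h⟩))

lemma ordcol_fwd {M : ZFSet} {i : ZFSet → ZFSet} (hi : OrdcolChar M i) :
    ∀ x ∈ M, ∀ y : ZFSet, x ∈ y → i x ∈ i y := by
  intro x hxM y hxy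
  by_cases hy : IsOrd y
  · have hx : IsOrd x := isOrd_of_mem hy hxy
    rw [hi.1 x hx, hi.1 y hy]
    exact hxy
  · exact (hi.2 y hy (i x)).mpr ⟨x, hxy, hxM, rfl⟩

lemma ordcol_key (M : ZFSet) (hext : Extensional M)
    (habs : ∀ x ∈ M, OrdIn M x → IsOrd x)
    (i : ZFSet → ZFSet) (hi : OrdcolChar M i) :
    ∀ o : Ordinal,
      (∀ x ∈ M, x.rank < o → ¬ IsOrd x → ¬ IsOrd (i x)) ∧
      (∀ x ∈ M, ∀ y ∈ M, x.rank < o → y.rank < o → i x = i y → x = y) ∧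
      (∀ x ∈ M, ∀ y ∈ M, x.rank < o → y.rank < o → i x ∈ i y → x ∈ y) := by
  intro o
  induction o using Ordinal.induction with
  | _ o IH =>
    have A : ∀ x ∈ M, x.rank < o → ¬ IsOrd x → ¬ IsOrd (i x) := by
      intro y hyM hry hy hiy
      have hnord : ¬ OrdIn M y := fun h => hy (habs y hyM h)
      rw [OrdIn, not_and_or] at hnord
      rcases hnord with h1 | h2
      · push_neg at h1
        obtain ⟨a, haM, hay, b, hbM, hba, hby⟩ := h1
        have hiay : i a ∈ i y := (hi.2 y hy (i a)).mpr ⟨a, hay, haM, rfl⟩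
        have hiba : i b ∈ i a := ordcol_fwd hi b hbM a hba
        have hiby : i b ∈ i y := hiy.mem_trans hiba hiay
        obtain ⟨t, hty, htM, hit⟩ := (hi.2 y hy (i b)).mp hiby
        have hB := (IH y.rank hry).2.1
        have : t = b := hB t htM b hbM (ZFSet.rank_lt_of_mem hty)
          ((ZFSet.rank_lt_of_mem hba).trans (ZFSet.rank_lt_of_mem hay)) hit
        exact hby (this ▸ hty)
      · push_neg at h2
        obtain ⟨a, haM, b, hbM, hay, hby, hab, haeb, hba⟩ := h2
        have hiay : i a ∈ i y := (hi.2 y hy (i a)).mpr ⟨a, hay, haM, rfl⟩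
        have hiby : i b ∈ i y := (hi.2 y hy (i b)).mpr ⟨b, hby, hbM, rfl⟩
        have hra : a.rank < y.rank := ZFSet.rank_lt_of_mem hay
        have hrb : b.rank < y.rank := ZFSet.rank_lt_of_mem hby
        have hB := (IH y.rank hry).2.1
        have hC := (IH y.rank hry).2.2
        rcases ord_tri (i a) (i b) (isOrd_of_mem hiy hiay) (isOrd_of_mem hiy hiby)
          with h | h | h
        · exact hab (hC a haM b hbM hra hrb h)
        · exact haeb (hB a haM b hbM hra hrb h)
        · exact hba (hC b hbM a haM hrb hra h)
    have B : ∀ x ∈ M, ∀ y ∈ M, x.rank < o → y.rank < o → i x = i y → x = y := by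
      intro x hxM y hyM hrx hry hxy
      by_cases hx : IsOrd x <;> by_cases hy : IsOrd y
      · rw [hi.1 x hx, hi.1 y hy] at hxy
        exact hxy
      · have h1 : IsOrd (i y) := by rw [← hxy, hi.1 x hx]; exact hx
        exact absurd h1 (A y hyM hry hy)
      · have h1 : IsOrd (i x) := by rw [hxy, hi.1 y hy]; exact hy
        exact absurd h1 (A x hxM hrx hx)
      · have hB' := (IH (max x.rank y.rank) (max_lt hrx hry)).2.1
        apply hext x hxM y hyM
        intro z hzM
        constructor
        · intro hzx
          have hz : i z ∈ i y := hxy ▸ (hi.2 x hx (i z)).mpr ⟨z, hzx, hzM, rfl⟩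
          obtain ⟨t, hty, htM, hit⟩ := (hi.2 y hy (i z)).mp hz
          have : t = z := hB' t htM z hzM
            ((ZFSet.rank_lt_of_mem hty).trans_le (le_max_right _ _))
            ((ZFSet.rank_lt_of_mem hzx).trans_le (le_max_left _ _)) hit
          exact this ▸ hty
        · intro hzy
          have hz : i z ∈ i x := hxy ▸ (hi.2 y hy (i z)).mpr ⟨z, hzy, hzM, rfl⟩
          obtain ⟨t, htx, htM, hit⟩ := (hi.2 x hx (i z)).mp hz
          have : t = z := hB' t htM z hzM
            ((ZFSet.rank_lt_of_mem htx).trans_le (le_max_left _ _))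
            ((ZFSet.rank_lt_of_mem hzy).trans_le (le_max_right _ _)) hit
          exact this ▸ htx
    refine ⟨A, B, ?_⟩
    intro x hxM y hyM hrx hry hxy
    by_cases hy : IsOrd y
    · rw [hi.1 y hy] at hxy
      have hix : IsOrd (i x) := isOrd_of_mem hy hxy
      have hx : IsOrd x := by
        by_contra hx
        exact A x hxM hrx hx hix
      rw [hi.1 x hx] at hxy
      exact hxy
    · obtain ⟨t, hty, htM, hit⟩ := (hi.2 y hy (i x)).mp hxy
      have : t = x := B t htM x hxM ((ZFSet.rank_lt_of_mem hty).trans hry) hrx hit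
      exact this ▸ hty


/-- If `M` is ord-absolute then the ord-collapse `i = ordcol^M`
is an ∈-isomorphism from `M` onto its image `ordcol(M)`. -/
theorem ordcol_is_mem_isomorphism (M : ZFSet) (hM : OrdAbsolute M)
    (i : ZFSet → ZFSet) (hi : OrdcolChar M i) :
    Set.InjOn i M.toSet ∧ ∀ x ∈ M, ∀ y ∈ M, (x ∈ y ↔ i x ∈ i y) := by
  have key := ordcol_key M hM.1.1 hM.2.2.2.2 i hi
  constructor
  · intro x hx y hy hxy
    have hx' : x ∈ M := hx
    have hy' : y ∈ M := hy
    exact (key (Order.succ (max x.rank y.rank))).2.1 x hx' y hy'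
      ((le_max_left _ _).trans_lt (Order.lt_succ _))
      ((le_max_right _ _).trans_lt (Order.lt_succ _)) hxy
  · intro x hx y hy
    constructor
    · exact fun h => ordcol_fwd hi x hx y h
    · intro h
      exact (key (Order.succ (max x.rank y.rank))).2.2 x hx y hy
        ((le_max_left _ _).trans_lt (Order.lt_succ _))
        ((le_max_right _ _).trans_lt (Order.lt_succ _)) h


end NepPaper
end

section
/- If M is an ord-absolute model and i = ordcol^M is its ord-collapse, then for every x ∈ M, i(x) is an ordinal if and only if x is an ordinal; in particular M ∩ ON = ordcol(M) ∩ ON. -/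
namespace NepPaper

/-- A member of a von Neumann ordinal is a von Neumann ordinal. -/
theorem mem_isOrdinal {x y : ZFSet} (hx : x.IsOrdinal) (hyx : y ∈ x) :
    y.IsOrdinal := by
  refine ⟨fun a ha b hb => hx.mem_trans' hb ha hyx, fun {a b c} hab hbc hcy => ?_⟩
  exact hx.mem_trans' hab hbc (hx.isTransitive.mem_trans hcy hyx)

/-- Trichotomy for von Neumann ordinals. -/
theorem ord_trichotomy : ∀ a : ZFSet, a.IsOrdinal →
    ∀ b : ZFSet, b.IsOrdinal → a ∈ b ∨ a = b ∨ b ∈ a := by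
  intro a
  induction a using ZFSet.inductionOn with
  | _ a IH1 =>
    intro ha b
    induction b using ZFSet.inductionOn with
    | _ b IH2 =>
      intro hb
      by_contra h
      push_neg at h
      obtain ⟨h1, h2, h3⟩ := h
      have hab : a ⊆ b := by
        intro a' ha'
        rcases IH1 a' ha' (mem_isOrdinal ha ha') b hb with h' | h' | h'
        · exact h'
        · exact absurd (show b ∈ a by rw [← h']; exact ha') h3
        · exact absurd (ha.mem_trans h' ha') h3
      have hba : b ⊆ a := by
        intro b' hb'
        rcases IH2 b' hb' (mem_isOrdinal hb hb') with h' | h' | h'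
        · exact absurd (hb.mem_trans h' hb') h1
        · exact absurd (show a ∈ b by rw [h']; exact hb') h1
        · exact h'
      exact h2 (ZFSet.ext fun z => ⟨fun hz => hab hz, fun hz => hba hz⟩)

theorem ordcol_isOrd {M : ZFSet} (hM : OrdAbsolute M)
    {i : ZFSet → ZFSet} (hi : OrdcolChar M i) :
    ∀ x : ZFSet, x ∈ M → IsOrd (i x) → IsOrd x := by
  intro x
  induction x using ZFSet.inductionOn with
  | _ x IH =>
    intro hxM hix
    by_contra hnx
    have hno : ¬ OrdIn M x := fun h => hnx (hM.2.2.2.2 x hxM h)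
    unfold OrdIn at hno
    rcases not_and_or.mp hno with hA | hB
    · -- transitivity fails in M
      push_neg at hA
      obtain ⟨y, hyM, hyx, z, hzM, hzy, hzx⟩ := hA
      have hiy : i y ∈ i x := (hi.2 x hnx (i y)).2 ⟨y, hyx, hyM, rfl⟩
      have hy : IsOrd y := IH y hyx hyM (mem_isOrdinal hix hiy)
      have hiy' : i y = y := hi.1 y hy
      have hz : IsOrd z := mem_isOrdinal hy hzy
      have hzix : z ∈ i x := hix.mem_trans (show z ∈ i y by rw [hiy']; exact hzy) hiy
      obtain ⟨t, htx, htM, hit⟩ := (hi.2 x hnx z).1 hzix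
      have ht : IsOrd t := IH t htx htM (show IsOrd (i t) by rw [hit]; exact hz)
      have : t = z := by rw [← hi.1 t ht, hit]
      exact hzx (this ▸ htx)
    · -- trichotomy fails in M
      push_neg at hB
      obtain ⟨y, hyM, z, hzM, hyx, hzx, hyz, hne, hzy⟩ := hB
      have hiy : i y ∈ i x := (hi.2 x hnx (i y)).2 ⟨y, hyx, hyM, rfl⟩
      have hiz : i z ∈ i x := (hi.2 x hnx (i z)).2 ⟨z, hzx, hzM, rfl⟩
      have hy : IsOrd y := IH y hyx hyM (mem_isOrdinal hix hiy)
      have hz : IsOrd z := IH z hzx hzM (mem_isOrdinal hix hiz)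
      rcases ord_trichotomy y hy z hz with h' | h' | h'
      · exact hyz h'
      · exact hne h'
      · exact hzy h'

/-- For ord-absolute `M`, the ord-collapse `i` satisfies
`i x ∈ ON ↔ x ∈ ON`; in particular `M ∩ ON = ordcol(M) ∩ ON`. -/
theorem ordcol_ordinal_iff (M : ZFSet) (hM : OrdAbsolute M)
    (i : ZFSet → ZFSet) (hi : OrdcolChar M i) :
    (∀ x ∈ M, (IsOrd (i x) ↔ IsOrd x)) ∧
    {z : ZFSet | z ∈ M ∧ IsOrd z} = {z : ZFSet | (∃ x ∈ M, i x = z) ∧ IsOrd z} := by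
  constructor
  · intro x hx
    exact ⟨ordcol_isOrd hM hi x hx, fun h => by rw [hi.1 x h]; exact h⟩
  · ext z
    simp only [Set.mem_setOf_eq]
    constructor
    · rintro ⟨hzM, hz⟩
      exact ⟨⟨z, hzM, hi.1 z hz⟩, hz⟩
    · rintro ⟨⟨x, hxM, hx⟩, hz⟩
      have hox : IsOrd x := ordcol_isOrd hM hi x hxM (show IsOrd (i x) by rw [hx]; exact hz)
      have : x = z := by rw [← hi.1 x hox, hx]
      exact ⟨this ▸ hxM, hz⟩

end NepPaper
end

section
/- If M is an ord-absolute model, then its ord-collapse ordcol(M) is ord-transitive, and ordcol^M is the identity map if and only if M is already ord-transitive. -/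
namespace NepPaper

theorem ord_mem_ord {x y : ZFSet} (hx : x.IsOrdinal) (hy : y ∈ x) : y.IsOrdinal := by
  refine ⟨fun a ha => fun b hb => hx.mem_trans' hb ha hy, fun {u v w} huv hvw hwy => ?_⟩
  exact hx.mem_trans' huv hvw (hx.mem_trans hwy hy)

theorem ord_tri_s2 : ∀ x y : ZFSet, x.IsOrdinal → y.IsOrdinal → x ∈ y ∨ x = y ∨ y ∈ x := by
  intro x
  induction x using ZFSet.inductionOn with
  | _ x IHx =>
  intro y
  induction y using ZFSet.inductionOn with
  | _ y IHy =>
  intro hx hy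
  by_cases hxy : x ∈ y
  · exact Or.inl hxy
  by_cases hyx : y ∈ x
  · exact Or.inr (Or.inr hyx)
  refine Or.inr (Or.inl (ZFSet.ext fun z => ⟨fun hz => ?_, fun hz => ?_⟩))
  · rcases IHx z hz y (ord_mem_ord hx hz) hy with h | h | h
    · exact h
    · exact absurd (h ▸ hz) hyx
    · exact absurd (hx.mem_trans h hz) hyx
  · rcases IHy z hz hx (ord_mem_ord hy hz) with h | h | h
    · exact absurd (hy.mem_trans h hz) hxy
    · exact absurd (h ▸ hz) hxy
    · exact h

theorem mk_ofNat_mem_omega (n : ℕ) : ZFSet.mk (PSet.ofNat n) ∈ ZFSet.omega :=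
  ⟨⟨n⟩, PSet.Equiv.rfl⟩

theorem mem_omega_iff {z : ZFSet} : z ∈ ZFSet.omega ↔ ∃ n : ℕ, z = ZFSet.mk (PSet.ofNat n) := by
  induction z using Quotient.inductionOn with
  | h x =>
    constructor
    · rintro ⟨⟨n⟩, h⟩
      exact ⟨n, Quotient.sound h⟩
    · rintro ⟨n, h⟩
      rw [h]
      exact mk_ofNat_mem_omega n

theorem mk_ofNat_zero : ZFSet.mk (PSet.ofNat 0) = ∅ := rfl

theorem mk_ofNat_succ (n : ℕ) :
    ZFSet.mk (PSet.ofNat (n+1)) = insert (ZFSet.mk (PSet.ofNat n)) (ZFSet.mk (PSet.ofNat n)) := rfl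

/-- For ord-absolute `M`, the ord-collapse `ordcol(M)` is
ord-transitive, and `ordcol^M` is the identity (on `M`) iff `M` is already
ord-transitive. -/
theorem ordcol_ordTransitive (M : ZFSet) (hM : OrdAbsolute M)
    (i : ZFSet → ZFSet) (hi : OrdcolChar M i)
    (M' : ZFSet) (hM' : ∀ z : ZFSet, z ∈ M' ↔ ∃ x ∈ M, i x = z) :
    OrdTransitive M' ∧ ((∀ x ∈ M, i x = x) ↔ OrdTransitive M) := by
  obtain ⟨⟨hext, hempty, hpair, hunion, hdiff⟩, homM, homegaM, homsub, habs⟩ := hM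
  obtain ⟨hiord, hicol⟩ := hi
  -- forward membership preservation
  have fwd : ∀ x, x ∈ M → ∀ y, x ∈ y → i x ∈ i y := by
    intro x hxM y hxy
    by_cases hy : IsOrd y
    · have hx : IsOrd x := ord_mem_ord hy hxy
      rw [hiord x hx, hiord y hy]; exact hxy
    · exact (hicol y hy (i x)).2 ⟨x, hxy, hxM, rfl⟩
  -- key lemma B : collapse of a non-ordinal is a non-ordinal
  have keyB : ∀ x, x ∈ M → ¬ IsOrd x → ¬ IsOrd (i x) := by
    intro x
    induction x using ZFSet.inductionOn with
    | _ x IH =>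
    intro hxM hxord hix
    apply hxord
    apply habs x hxM
    have hmem : ∀ t, t ∈ x → t ∈ M → IsOrd t ∧ i t = t := by
      intro t htx htM
      have hit : IsOrd (i t) := ord_mem_ord hix (fwd t htM x htx)
      have htord : IsOrd t := by
        by_contra h; exact IH t htx htM h hit
      exact ⟨htord, hiord t htord⟩
    have hixeq : ∀ z, z ∈ i x ↔ (z ∈ x ∧ z ∈ M) := by
      intro z
      rw [hicol x hxord z]
      constructor
      · rintro ⟨t, htx, htM, rfl⟩
        rw [(hmem t htx htM).2]; exact ⟨htx, htM⟩
      · rintro ⟨hzx, hzM⟩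
        exact ⟨z, hzx, hzM, (hmem z hzx hzM).2⟩
    constructor
    · intro y hyM hyx z hzM hzy
      have hyord := (hmem y hyx hyM).1
      have h1 : y ∈ i x := (hixeq y).2 ⟨hyx, hyM⟩
      have h2 : z ∈ i x := hix.mem_trans hzy h1
      exact ((hixeq z).1 h2).1
    · intro y hyM z hzM hyx hzx
      exact ord_tri_s2 y z (hmem y hyx hyM).1 (hmem z hzx hzM).1
  -- injectivity of i on M
  have inj : ∀ x, x ∈ M → ∀ y ∈ M, i x = i y → x = y := by
    intro x
    induction x using ZFSet.inductionOn with
    | _ x IH =>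
    intro hxM y hyM heq
    by_cases hx : IsOrd x <;> by_cases hy : IsOrd y
    · rw [← hiord x hx, ← hiord y hy, heq]
    · exact absurd (show IsOrd (i y) by rw [← heq, hiord x hx]; exact hx) (keyB y hyM hy)
    · exact absurd (show IsOrd (i x) by rw [heq, hiord y hy]; exact hy) (keyB x hxM hx)
    · apply hext x hxM y hyM
      intro z hzM
      constructor
      · intro hzx
        have h1 : i z ∈ i y := heq ▸ fwd z hzM x hzx
        rcases (hicol y hy (i z)).1 h1 with ⟨t, hty, htM, ht⟩
        have := IH z hzx hzM t htM ht.symm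
        exact this ▸ hty
      · intro hzy
        have h1 : i z ∈ i x := heq ▸ fwd z hzM y hzy
        rcases (hicol x hx (i z)).1 h1 with ⟨t, htx, htM, ht⟩
        have h2 : t = z := IH t htx htM z hzM ht
        exact h2 ▸ htx
  -- backward membership preservation
  have bwd : ∀ x, x ∈ M → ∀ y, y ∈ M → i x ∈ i y → x ∈ y := by
    intro x hxM y hyM h
    by_cases hy : IsOrd y
    · rw [hiord y hy] at h
      have hix : IsOrd (i x) := ord_mem_ord hy h
      have hx : IsOrd x := by
        by_contra hc; exact keyB x hxM hc hix
      rwa [hiord x hx] at h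
    · rcases (hicol y hy (i x)).1 h with ⟨t, hty, htM, ht⟩
      have h2 : t = x := inj t htM x hxM ht
      exact h2 ▸ hty
  have memM' : ∀ x, x ∈ M → i x ∈ M' := fun x hx => (hM' (i x)).2 ⟨x, hx, rfl⟩
  have homega_ord : IsOrd ZFSet.omega := habs _ homM homegaM.1
  have homega_fix : i ZFSet.omega = ZFSet.omega := hiord _ homega_ord
  have hnM' : ∀ n ∈ ZFSet.omega, n ∈ M' := by
    intro n hn
    have hnord : IsOrd n := ord_mem_ord homega_ord hn
    have := memM' n (homsub n hn)
    rwa [hiord n hnord] at this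
  -- M' is ord-absolute
  have habs' : OrdAbsolute M' := by
    refine ⟨⟨?_, ?_, ?_, ?_, ?_⟩, ?_, ⟨⟨?_, ?_⟩, ?_, ?_, ?_⟩, hnM', ?_⟩
    · -- extensionality
      intro a ha b hb hab
      rcases (hM' a).1 ha with ⟨x, hxM, rfl⟩
      rcases (hM' b).1 hb with ⟨y, hyM, rfl⟩
      refine congrArg i (hext x hxM y hyM fun z hzM => ?_)
      constructor
      · intro hzx
        exact bwd z hzM y hyM ((hab (i z) (memM' z hzM)).1 (fwd z hzM x hzx))
      · intro hzy
        exact bwd z hzM x hxM ((hab (i z) (memM' z hzM)).2 (fwd z hzM y hzy))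
    · -- empty set
      rcases hempty with ⟨e, heM, he⟩
      refine ⟨i e, memM' e heM, ?_⟩
      intro z' hz'
      rcases (hM' z').1 hz' with ⟨z, hzM, rfl⟩
      intro hcon
      exact he z hzM (bwd z hzM e heM hcon)
    · -- pairing
      intro a ha b hb
      rcases (hM' a).1 ha with ⟨x, hxM, rfl⟩
      rcases (hM' b).1 hb with ⟨y, hyM, rfl⟩
      rcases hpair x hxM y hyM with ⟨u, huM, hu⟩
      refine ⟨i u, memM' u huM, ?_⟩
      intro z' hz'
      rcases (hM' z').1 hz' with ⟨z, hzM, rfl⟩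
      constructor
      · intro h
        rcases (hu z hzM).1 (bwd z hzM u huM h) with h1 | h1
        · exact Or.inl (congrArg i h1)
        · exact Or.inr (congrArg i h1)
      · intro h
        rcases h with h1 | h1
        · exact fwd z hzM u ((hu z hzM).2 (Or.inl (inj z hzM x hxM h1)))
        · exact fwd z hzM u ((hu z hzM).2 (Or.inr (inj z hzM y hyM h1)))
    · -- union
      intro a ha b hb
      rcases (hM' a).1 ha with ⟨x, hxM, rfl⟩
      rcases (hM' b).1 hb with ⟨y, hyM, rfl⟩
      rcases hunion x hxM y hyM with ⟨u, huM, hu⟩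
      refine ⟨i u, memM' u huM, ?_⟩
      intro z' hz'
      rcases (hM' z').1 hz' with ⟨z, hzM, rfl⟩
      constructor
      · intro h
        rcases (hu z hzM).1 (bwd z hzM u huM h) with h1 | h1
        · exact Or.inl (fwd z hzM x h1)
        · exact Or.inr (fwd z hzM y h1)
      · intro h
        rcases h with h1 | h1
        · exact fwd z hzM u ((hu z hzM).2 (Or.inl (bwd z hzM x hxM h1)))
        · exact fwd z hzM u ((hu z hzM).2 (Or.inr (bwd z hzM y hyM h1)))
    · -- difference
      intro a ha b hb
      rcases (hM' a).1 ha with ⟨x, hxM, rfl⟩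
      rcases (hM' b).1 hb with ⟨y, hyM, rfl⟩
      rcases hdiff x hxM y hyM with ⟨u, huM, hu⟩
      refine ⟨i u, memM' u huM, ?_⟩
      intro z' hz'
      rcases (hM' z').1 hz' with ⟨z, hzM, rfl⟩
      constructor
      · intro h
        rcases (hu z hzM).1 (bwd z hzM u huM h) with ⟨h1, h2⟩
        exact ⟨fwd z hzM x h1, fun hc => h2 (bwd z hzM y hyM hc)⟩
      · rintro ⟨h1, h2⟩
        exact fwd z hzM u ((hu z hzM).2 ⟨bwd z hzM x hxM h1, fun hc => h2 (fwd z hzM y hc)⟩)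
    · -- omega ∈ M'
      exact homega_fix ▸ memM' _ homM
    · -- OrdIn M' omega, part 1
      intro y _ hyo z _ hzy
      exact homega_ord.mem_trans hzy hyo
    · -- OrdIn M' omega, part 2
      intro y _ z _ hyo hzo
      exact homegaM.1.2 y (homsub y hyo) z (homsub z hzo) hyo hzo
    · exact ZFSet.omega_zero
    · intro z _ hz
      exact ZFSet.omega_succ hz
    · -- minimality of omega in M'
      rintro w hw ⟨hw0, hwsucc⟩ z _ hzo
      have key : ∀ n : ℕ, ZFSet.mk (PSet.ofNat n) ∈ w := by
        intro n
        induction n with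
        | zero => rw [mk_ofNat_zero]; exact hw0
        | succ n ih =>
          rw [mk_ofNat_succ]
          exact hwsucc _ (hnM' _ (mk_ofNat_mem_omega n)) ih
      rcases mem_omega_iff.1 hzo with ⟨n, rfl⟩
      exact key n
    · -- ordinal absoluteness for M'
      intro x' hx' hordin
      rcases (hM' x').1 hx' with ⟨x, hxM, rfl⟩
      have hOx : OrdIn M x := by
        constructor
        · intro y hyM hyx z hzM hzy
          exact bwd z hzM x hxM
            (hordin.1 (i y) (memM' y hyM) (fwd y hyM x hyx) (i z) (memM' z hzM) (fwd z hzM y hzy))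
        · intro y hyM z hzM hyx hzx
          rcases hordin.2 (i y) (memM' y hyM) (i z) (memM' z hzM) (fwd y hyM x hyx)
              (fwd z hzM x hzx) with h | h | h
          · exact Or.inl (bwd y hyM z hzM h)
          · exact Or.inr (Or.inl (inj y hyM z hzM h))
          · exact Or.inr (Or.inr (bwd z hzM y hyM h))
      have hx : IsOrd x := habs x hxM hOx
      rw [hiord x hx]; exact hx
  have hMT' : OrdTransitive M' := by
    refine ⟨habs', ?_⟩
    intro x' hx'M' hx'ord t ht
    rcases (hM' x').1 hx'M' with ⟨x, hxM, rfl⟩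
    have hx : ¬ IsOrd x := by
      intro h
      exact hx'ord (by rw [hiord x h]; exact h)
    rcases (hicol x hx t).1 ht with ⟨s, _, hsM, rfl⟩
    exact memM' s hsM
  refine ⟨hMT', ?_, ?_⟩
  · intro hid
    have hMM : M' = M := by
      apply ZFSet.ext
      intro z
      rw [hM' z]
      constructor
      · rintro ⟨x, hxM, rfl⟩
        rw [hid x hxM]; exact hxM
      · intro hz
        exact ⟨z, hz, hid z hz⟩
    exact hMM ▸ hMT'
  · intro hMT x
    induction x using ZFSet.inductionOn with
    | _ x IH =>
    intro hxM
    by_cases hx : IsOrd x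
    · exact hiord x hx
    · apply ZFSet.ext
      intro z
      rw [hicol x hx z]
      constructor
      · rintro ⟨t, htx, htM, rfl⟩
        rw [IH t htx htM]; exact htx
      · intro hzx
        have hzM : z ∈ M := hMT.2 x hxM hx z hzx
        exact ⟨z, hzx, hzM, IH z hzx hzM⟩


end NepPaper
end

section
/- If M is a cf-ω-absolute ord-transitive model and M thinks that x is countable, then x ⊆ M. -/
namespace NepPaper

/-- `M` believes that `x` is countable: `M` contains (the graph of) an
injection of `x` into ω (functions coded by Kuratowski pairs). -/
def CtblIn (M x : ZFSet) : Prop :=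
  ∃ f ∈ M, ∀ a ∈ M, a ∈ x → ∃ b ∈ M, b ∈ ZFSet.omega ∧ ZFSet.pair a b ∈ f ∧
    ∀ a' ∈ M, a' ∈ x → ZFSet.pair a' b ∈ f → a' = a

/-- `M` believes that `α` is a successor ordinal. -/
def SuccIn (M α : ZFSet) : Prop :=
  ∃ β ∈ M, ∀ z ∈ M, (z ∈ α ↔ (z ∈ β ∨ z = β))

/-- `M` is successor-absolute: "α is a successor" and "α = β + 1" are
absolute between `M` and `V`. -/
def SuccAbs (M : ZFSet) : Prop :=
  (∀ α ∈ M, IsOrd α → (SuccIn M α ↔ ∃ β : ZFSet, IsOrd β ∧ α = insert β β)) ∧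
  (∀ α ∈ M, ∀ β ∈ M, IsOrd α → IsOrd β →
    ((∀ z ∈ M, (z ∈ α ↔ (z ∈ β ∨ z = β))) ↔ α = insert β β))

/-- `M` believes that `A` is a countable cofinal subset of `α`. -/
def CtblCofIn (M A α : ZFSet) : Prop :=
  CtblIn M A ∧ (∀ z ∈ M, z ∈ A → z ∈ α) ∧
  (∀ β ∈ M, β ∈ α → ∃ γ ∈ M, γ ∈ A ∧ (β ∈ γ ∨ β = γ))

/-- `A` really is a countable cofinal subset of `α` (in `V`). -/
def CtblCofV (A α : ZFSet) : Prop :=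
  A.toSet.Countable ∧ (∀ z ∈ A, z ∈ α) ∧ ∀ β ∈ α, ∃ γ ∈ A, (β ∈ γ ∨ β = γ)

/-- `M` is cf-ω-absolute: it is successor-absolute, and "cf(α) = ω" as well as
"A is a countable cofinal subset of α" are absolute between `M` and `V`. -/
def CfOmegaAbs (M : ZFSet) : Prop :=
  SuccAbs M ∧
  (∀ α ∈ M, IsOrd α → ((∃ A ∈ M, CtblCofIn M A α) ↔ ∃ A : ZFSet, CtblCofV A α)) ∧
  (∀ α ∈ M, ∀ A ∈ M, IsOrd α → (CtblCofIn M A α ↔ CtblCofV A α))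


theorem aux_isOrdinal_mem {x y : ZFSet} (h : x.IsOrdinal) (hy : y ∈ x) : y.IsOrdinal := by
  constructor
  · intro a ha b hb
    exact h.mem_trans' hb ha hy
  · intro a b c hab hbc hcy
    exact h.mem_trans' hab hbc (h.isTransitive.subset_of_mem hy hcy)

theorem aux_empty_mem {x : ZFSet} (h : x.IsOrdinal) (hne : x ≠ ∅) : (∅ : ZFSet) ∈ x := by
  obtain ⟨y, hy, hint⟩ := ZFSet.regularity x hne
  have hy0 : y = ∅ := by
    rw [ZFSet.eq_empty]
    intro z hz
    have hzx : z ∈ x := h.isTransitive.subset_of_mem hy hz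
    have : z ∈ x ∩ y := ZFSet.mem_inter.2 ⟨hzx, hz⟩
    rw [hint] at this
    exact ZFSet.notMem_empty z this
  rwa [hy0] at hy

theorem aux_one_mem {α γ : ZFSet} (h : α.IsOrdinal) (hγ : γ ∈ α) (hγne : γ ≠ ∅) :
    (insert ∅ ∅ : ZFSet) ∈ α := by
  classical
  set s : ZFSet := ZFSet.sep (fun z => z ≠ ∅) α with hs
  have hγs : γ ∈ s := ZFSet.mem_sep.2 ⟨hγ, hγne⟩
  have hsne : s ≠ ∅ := by
    intro h0
    rw [h0] at hγs
    exact ZFSet.notMem_empty _ hγs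
  obtain ⟨y, hy, hint⟩ := ZFSet.regularity s hsne
  obtain ⟨hyα, hyne⟩ := ZFSet.mem_sep.1 hy
  have hyord : y.IsOrdinal := aux_isOrdinal_mem h hyα
  have h0y : (∅ : ZFSet) ∈ y := aux_empty_mem hyord hyne
  have hy1 : y = insert ∅ ∅ := by
    apply ZFSet.ext
    intro z
    constructor
    · intro hz
      have hzα : z ∈ α := h.mem_trans hz hyα
      have hz0 : z = ∅ := by
        by_contra hzne
        have : z ∈ s ∩ y := ZFSet.mem_inter.2 ⟨ZFSet.mem_sep.2 ⟨hzα, hzne⟩, hz⟩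
        rw [hint] at this
        exact ZFSet.notMem_empty z this
      rw [hz0]
      exact ZFSet.mem_insert ∅ ∅
    · intro hz
      rcases ZFSet.mem_insert_iff.1 hz with h0 | h0
      · rwa [h0]
      · exact absurd h0 (ZFSet.notMem_empty z)
  rwa [hy1] at hyα

theorem aux_ord_subset (M : ZFSet) (hM : OrdTransitive M) (hcf : CfOmegaAbs M) :
    ∀ α : ZFSet, IsOrd α → α ∈ M → CtblIn M α → ∀ β ∈ α, β ∈ M := by
  classical
  intro α
  induction α using ZFSet.inductionOn with
  | _ α IH =>
  intro hord hαM hct β hβα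
  have h0M : (∅ : ZFSet) ∈ M := hM.1.2.2.2.1 _ ZFSet.omega_zero
  by_cases h1 : ∃ γ ∈ α, γ ≠ (∅ : ZFSet)
  · obtain ⟨γ0, hγ0, hγ0ne⟩ := h1
    have h1α : (insert ∅ ∅ : ZFSet) ∈ α := aux_one_mem hord hγ0 hγ0ne
    have h1M : (insert ∅ ∅ : ZFSet) ∈ M :=
      hM.1.2.2.2.1 _ (ZFSet.omega_succ ZFSet.omega_zero)
    obtain ⟨u, huM, hu⟩ := hM.1.1.2.2.2.2 α hαM _ h1M
    have h1u : (insert ∅ ∅ : ZFSet) ∈ u :=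
      (hu _ h1M).2 ⟨h1α, ZFSet.mem_irrefl _⟩
    have h0nu : (∅ : ZFSet) ∉ u := fun h => ((hu _ h0M).1 h).2 (ZFSet.mem_insert ∅ ∅)
    have hune : u ≠ ∅ := by
      intro h0
      rw [h0] at h1u
      exact ZFSet.notMem_empty _ h1u
    have hunotord : ¬ IsOrd u := fun ho => h0nu (aux_empty_mem ho hune)
    have husub : ∀ t ∈ u, t ∈ M := hM.2 u huM hunotord
    obtain ⟨f, hfM, hf⟩ := hct
    have hctu : CtblIn M u := by
      refine ⟨f, hfM, fun a haM hau => ?_⟩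
      obtain ⟨b, hbM, hbω, hpab, huniq⟩ := hf a haM ((hu a haM).1 hau).1
      exact ⟨b, hbM, hbω, hpab, fun a' ha'M ha'u hp =>
        huniq a' ha'M ((hu a' ha'M).1 ha'u).1 hp⟩
    have hccin : CtblCofIn M u α := by
      refine ⟨hctu, fun z hzM hzu => ((hu z hzM).1 hzu).1, fun b hbM hbα => ?_⟩
      by_cases hb1 : b ∈ (insert ∅ ∅ : ZFSet)
      · exact ⟨insert ∅ ∅, h1M, h1u, Or.inl hb1⟩
      · exact ⟨b, hbM, (hu b hbM).2 ⟨hbα, hb1⟩, Or.inr rfl⟩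
    have hccv : CtblCofV u α := (hcf.2.2 α hαM u huM hord).1 hccin
    obtain ⟨γ, hγu, hγ⟩ := hccv.2.2 β hβα
    have hγM : γ ∈ M := husub γ hγu
    have hγα : γ ∈ α := hccv.2.1 γ hγu
    have hγord : IsOrd γ := aux_isOrdinal_mem hord hγα
    have hctγ : CtblIn M γ := by
      refine ⟨f, hfM, fun a haM haγ => ?_⟩
      have haα : a ∈ α := hord.mem_trans haγ hγα
      obtain ⟨b, hbM, hbω, hpab, huniq⟩ := hf a haM haα
      exact ⟨b, hbM, hbω, hpab, fun a' ha'M ha'γ hp =>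
        huniq a' ha'M (hord.mem_trans ha'γ hγα) hp⟩
    have hγsub := IH γ hγα hγord hγM hctγ
    rcases hγ with h | h
    · exact hγsub β h
    · rw [h]; exact hγM
  · push_neg at h1
    rw [h1 β hβα]
    exact h0M

/-- If `M` is a cf-ω-absolute ord-transitive model and `M` thinks
that `x` is countable, then `x ⊆ M`. -/
theorem subset_of_ctblIn (M : ZFSet) (hM : OrdTransitive M) (hcf : CfOmegaAbs M)
    (x : ZFSet) (hx : x ∈ M) (hctbl : CtblIn M x) : ∀ t ∈ x, t ∈ M := by
  by_cases hord : IsOrd x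
  · exact aux_ord_subset M hM hcf x hord hx hctbl
  · exact hM.2 x hx hord

end NepPaper
end

section
/- (Bigness lemma for creatures) If φ is an i-creature with nor(φ) > 1 and F : val(φ) → 2 is any 2-coloring, then there exists an i-creature ψ ≤ φ such that nor(ψ) ≥ nor(φ) − 1 and F is constant on val(ψ). -/
namespace NepPaper

/-- An `i`-creature (with `bound = F i`): a function `f` on subsets of a
nonempty set `val ⊆ {0, …, bound - 1}` which is monotonic, satisfies bigness,
vanishes on `∅` and is `≤ 1` on singletons. -/
structure Creature (bound : ℕ) where
  val : Finset ℕ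
  f : Finset ℕ → ℕ
  val_nonempty : val.Nonempty
  val_lt : ∀ x ∈ val, x < bound
  mono : ∀ b c : Finset ℕ, b ⊆ c → c ⊆ val → f b ≤ f c
  big : ∀ b c : Finset ℕ, b ⊆ val → c ⊆ val → f (b ∪ c) ≤ max (f b) (f c) + 1
  f_empty : f ∅ = 0
  f_singleton : ∀ x ∈ val, f {x} ≤ 1

/-- The norm of a creature: `nor(φ) = φ(val φ)`. -/
def Creature.nor {n : ℕ} (φ : Creature n) : ℕ := φ.f φ.val

/-- `ψ` is stronger than `φ` (i.e. `ψ ≤ φ`). -/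
def Creature.Stronger {n : ℕ} (ψ φ : Creature n) : Prop :=
  ψ.val ⊆ φ.val ∧ ∀ b : Finset ℕ, b ⊆ ψ.val → ψ.f b ≤ φ.f b

/-- `k*_i = ∏_{j < i} F j`. -/
def kstar (F : ℕ → ℕ) (i : ℕ) : ℕ := (Finset.range i).prod F

/-- The norm condition for conditions of the creature forcing `P`:
`liminf nor(p i)^(1/k*_i) = ∞`, i.e. for every `m` eventually
`nor (p i) > m ^ (k*_i)`. -/
def NormCond (F : ℕ → ℕ) (p : ∀ i : ℕ, Creature (F i)) : Prop :=
  ∀ m : ℕ, ∃ N : ℕ, ∀ i : ℕ, N ≤ i → m ^ kstar F i < (p i).nor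


/-- Bigness lemma: If `φ` is an `i`-creature with `nor φ > 1`
and `F` is a 2-coloring of `val φ`, then there is a creature `ψ ≤ φ` with
`nor ψ ≥ nor φ − 1` on which `F` is constant. -/
theorem creature_bigness (n : ℕ) (φ : Creature n) (hnor : 1 < φ.nor)
    (F : ℕ → Bool) :
    ∃ ψ : Creature n, ψ.Stronger φ ∧ φ.nor - 1 ≤ ψ.nor ∧
      ∀ x ∈ ψ.val, ∀ y ∈ ψ.val, F x = F y := by
  classical
  -- split val into the two color classes
  have key : ∀ t : Bool, φ.nor - 1 ≤ φ.f (φ.val.filter (fun x => F x = t)) →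
      ∃ ψ : Creature n, ψ.Stronger φ ∧ φ.nor - 1 ≤ ψ.nor ∧
        ∀ x ∈ ψ.val, ∀ y ∈ ψ.val, F x = F y := by
    intro t ht
    set b := φ.val.filter (fun x => F x = t) with hb
    have hbsub : b ⊆ φ.val := Finset.filter_subset _ _
    have hbne : b.Nonempty := by
      rw [Finset.nonempty_iff_ne_empty]
      intro h
      rw [h, φ.f_empty] at ht
      omega
    refine ⟨⟨b, φ.f, hbne, fun x hx => φ.val_lt x (hbsub hx),
      fun u v huv hv => φ.mono u v huv (hv.trans hbsub),
      fun u v hu hv => φ.big u v (hu.trans hbsub) (hv.trans hbsub),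
      φ.f_empty, fun x hx => φ.f_singleton x (hbsub hx)⟩,
      ⟨hbsub, fun _ _ => le_refl _⟩, ht, ?_⟩
    intro x hx y hy
    simp only [hb, Finset.mem_filter] at hx hy
    rw [hx.2, hy.2]
  have hsplit : φ.val = (φ.val.filter (fun x => F x = true)) ∪
      (φ.val.filter (fun x => F x = false)) := by
    ext x
    simp only [Finset.mem_union, Finset.mem_filter]
    by_cases h : F x = true <;> simp [h]
  have hbig := φ.big (φ.val.filter (fun x => F x = true))
    (φ.val.filter (fun x => F x = false)) (Finset.filter_subset _ _)
    (Finset.filter_subset _ _)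
  rw [← hsplit] at hbig
  have : φ.nor - 1 ≤ φ.f (φ.val.filter (fun x => F x = true)) ∨
      φ.nor - 1 ≤ φ.f (φ.val.filter (fun x => F x = false)) := by
    simp only [Creature.nor, max_def] at hbig ⊢
    split at hbig <;> omega
  rcases this with h | h
  · exact key true h
  · exact key false h

end NepPaper
end

section
/- (Halving) For every i-creature φ there exists an i-creature half(φ) ≤ φ such that: (1) nor(half(φ)) ≥ ⌈nor(φ)/2⌉, and (2) whenever ψ ≤ half(φ) is an i-creature with nor(ψ) > 0, there exists an i-creature ψ' ≤ φ with nor(ψ') ≥ ⌈nor(φ)/2⌉ and val(ψ') ⊆ val(ψ). -/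
namespace NepPaper

/-- Halving: For every `i`-creature `φ` there is
`half(φ) ≤ φ` with `nor (half φ) ≥ ⌈nor φ / 2⌉` such that every `ψ ≤ half(φ)`
with `nor ψ > 0` can be "un-halved" to some `ψ' ≤ φ` with
`nor ψ' ≥ ⌈nor φ / 2⌉` and `val ψ' ⊆ val ψ`. -/
theorem creature_halving (n : ℕ) (φ : Creature n) :
    ∃ h : Creature n, h.Stronger φ ∧ (φ.nor + 1) / 2 ≤ h.nor ∧
      ∀ ψ : Creature n, ψ.Stronger h → 0 < ψ.nor →
        ∃ ψ' : Creature n, ψ'.Stronger φ ∧ (φ.nor + 1) / 2 ≤ ψ'.nor ∧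
          ψ'.val ⊆ ψ.val := by
  set k := φ.nor / 2 with hk
  refine ⟨⟨φ.val, fun b => φ.f b - k, φ.val_nonempty, φ.val_lt,
    fun b c hbc hc => Nat.sub_le_sub_right (φ.mono b c hbc hc) k,
    fun b c hb hc => ?_, by simp [φ.f_empty],
    fun x hx => le_trans (Nat.sub_le _ _) (φ.f_singleton x hx)⟩,
    ⟨subset_rfl, fun b _ => Nat.sub_le _ _⟩, ?_, ?_⟩
  · calc φ.f (b ∪ c) - k ≤ (max (φ.f b) (φ.f c) + 1) - k :=
          Nat.sub_le_sub_right (φ.big b c hb hc) k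
      _ ≤ (max (φ.f b) (φ.f c) - k) + 1 := by omega
      _ = max (φ.f b - k) (φ.f c - k) + 1 := by omega
  · show (φ.nor + 1) / 2 ≤ φ.f φ.val - k
    have : φ.f φ.val = φ.nor := rfl
    omega
  · intro ψ hψ hnor
    refine ⟨⟨ψ.val, φ.f, ψ.val_nonempty,
      fun x hx => φ.val_lt x (hψ.1 hx),
      fun b c hbc hc => φ.mono b c hbc (hc.trans hψ.1),
      fun b c hb hc => φ.big b c (hb.trans hψ.1) (hc.trans hψ.1),
      φ.f_empty, fun x hx => φ.f_singleton x (hψ.1 hx)⟩,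
      ⟨hψ.1, fun b _ => le_rfl⟩, ?_, subset_rfl⟩
    show (φ.nor + 1) / 2 ≤ φ.f ψ.val
    have h1 : ψ.f ψ.val ≤ φ.f ψ.val - k := hψ.2 ψ.val subset_rfl
    have h2 : 0 < ψ.f ψ.val := hnor
    omega

end NepPaper
end

section
/- (Meet of creatures) If φ₀ and φ₁ are i-creatures with val(φ₀) ∩ val(φ₁) ≠ ∅, then there exists a weakest i-creature φ₀ ∧ φ₁ stronger than both φ₀ and φ₁; that is, φ₀ ∧ φ₁ ≤ φ₀, φ₀ ∧ φ₁ ≤ φ₁, val(φ₀ ∧ φ₁) = val(φ₀) ∩ val(φ₁), and for every norm ψ on a subset of val(φ₀) ∩ val(φ₁) with ψ ≤ φ₀ and ψ ≤ φ₁ we have ψ ≤ φ₀ ∧ φ₁. -/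
namespace NepPaper

def splitSet (b : Finset ℕ) : Finset (Finset ℕ × Finset ℕ) :=
  (b.powerset ×ˢ b.powerset).filter (fun p => p.1 ∪ p.2 = b ∧ p.1 ≠ b ∧ p.2 ≠ b)

lemma mem_splitSet {b : Finset ℕ} {p : Finset ℕ × Finset ℕ} :
    p ∈ splitSet b ↔ p.1 ∪ p.2 = b ∧ p.1 ≠ b ∧ p.2 ≠ b := by
  simp only [splitSet, Finset.mem_filter, Finset.mem_product, Finset.mem_powerset]
  constructor
  · rintro ⟨_, h⟩; exact h
  · rintro ⟨hu, h1, h2⟩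
    exact ⟨⟨hu ▸ Finset.subset_union_left, hu ▸ Finset.subset_union_right⟩, hu, h1, h2⟩

lemma splitSet_card {b : Finset ℕ} {p : Finset ℕ × Finset ℕ} (hp : p ∈ splitSet b) :
    p.1.card < b.card ∧ p.2.card < b.card := by
  obtain ⟨hu, h1, h2⟩ := mem_splitSet.1 hp
  constructor
  · exact Finset.card_lt_card (lt_of_le_of_ne (hu ▸ Finset.subset_union_left) h1)
  · exact Finset.card_lt_card (lt_of_le_of_ne (hu ▸ Finset.subset_union_right) h2)

def meetF (f0 f1 : Finset ℕ → ℕ) (b : Finset ℕ) : ℕ :=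
  (insert (f0 b) (insert (f1 b)
    ((splitSet b).attach.image fun p =>
      1 + max (meetF f0 f1 p.1.1) (meetF f0 f1 p.1.2)))).min' (Finset.insert_nonempty _ _)
termination_by b.card
decreasing_by
  all_goals first
    | exact (splitSet_card p.property).1
    | exact (splitSet_card p.property).2

lemma meetF_le_f0 (f0 f1 : Finset ℕ → ℕ) (b : Finset ℕ) : meetF f0 f1 b ≤ f0 b := by
  rw [meetF]
  exact Finset.min'_le _ _ (Finset.mem_insert_self _ _)

lemma meetF_le_f1 (f0 f1 : Finset ℕ → ℕ) (b : Finset ℕ) : meetF f0 f1 b ≤ f1 b := by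
  rw [meetF]
  exact Finset.min'_le _ _ (Finset.mem_insert_of_mem (Finset.mem_insert_self _ _))

lemma meetF_le_split (f0 f1 : Finset ℕ → ℕ) {b : Finset ℕ} {p : Finset ℕ × Finset ℕ}
    (hp : p ∈ splitSet b) :
    meetF f0 f1 b ≤ 1 + max (meetF f0 f1 p.1) (meetF f0 f1 p.2) := by
  rw [meetF]
  refine Finset.min'_le _ _ (Finset.mem_insert_of_mem (Finset.mem_insert_of_mem ?_))
  exact Finset.mem_image.2 ⟨⟨p, hp⟩, Finset.mem_attach _ _, rfl⟩

lemma meetF_cases (f0 f1 : Finset ℕ → ℕ) (b : Finset ℕ) :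
    meetF f0 f1 b = f0 b ∨ meetF f0 f1 b = f1 b ∨
      ∃ p ∈ splitSet b, meetF f0 f1 b = 1 + max (meetF f0 f1 p.1) (meetF f0 f1 p.2) := by
  have h : meetF f0 f1 b ∈ (insert (f0 b) (insert (f1 b)
      ((splitSet b).attach.image fun p =>
        1 + max (meetF f0 f1 p.1.1) (meetF f0 f1 p.1.2)))) := by
    rw [meetF]; exact Finset.min'_mem _ _
  simp only [Finset.mem_insert, Finset.mem_image, Finset.mem_attach, true_and] at h
  rcases h with h | h | ⟨⟨p, hp⟩, hv⟩
  · exact Or.inl h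
  · exact Or.inr (Or.inl h)
  · exact Or.inr (Or.inr ⟨p, hp, hv.symm⟩)

lemma meetF_mono {n : ℕ} (φ₀ φ₁ : Creature n) :
    ∀ (c b : Finset ℕ), b ⊆ c → c ⊆ φ₀.val ∩ φ₁.val →
      meetF φ₀.f φ₁.f b ≤ meetF φ₀.f φ₁.f c := by
  intro c
  induction c using Finset.strongInduction with
  | _ c IH =>
    intro b hbc hcV
    rcases meetF_cases φ₀.f φ₁.f c with hc | hc | ⟨p, hp, hc⟩
    · rw [hc]
      exact le_trans (meetF_le_f0 _ _ _) (φ₀.mono b c hbc (hcV.trans Finset.inter_subset_left))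
    · rw [hc]
      exact le_trans (meetF_le_f1 _ _ _) (φ₁.mono b c hbc (hcV.trans Finset.inter_subset_right))
    · obtain ⟨hu, h1, h2⟩ := mem_splitSet.1 hp
      have hss1 : p.1 ⊂ c := lt_of_le_of_ne (hu ▸ Finset.subset_union_left) h1
      have hss2 : p.2 ⊂ c := lt_of_le_of_ne (hu ▸ Finset.subset_union_right) h2
      rw [hc]
      by_cases hb1 : b ⊆ p.1
      · have h := IH p.1 hss1 b hb1 (hss1.subset.trans hcV)
        have : meetF φ₀.f φ₁.f p.1 ≤ 1 + max (meetF φ₀.f φ₁.f p.1) (meetF φ₀.f φ₁.f p.2) := by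
          omega
        omega
      · by_cases hb2 : b ⊆ p.2
        · have h := IH p.2 hss2 b hb2 (hss2.subset.trans hcV)
          omega
        · have hq : (b ∩ p.1, b ∩ p.2) ∈ splitSet b := by
            refine mem_splitSet.2 ⟨?_, ?_, ?_⟩
            · rw [← Finset.inter_union_distrib_left, hu, Finset.inter_eq_left.2 hbc]
            · intro heq
              exact hb1 (heq ▸ Finset.inter_subset_right)
            · intro heq
              exact hb2 (heq ▸ Finset.inter_subset_right)
          have h0 := meetF_le_split φ₀.f φ₁.f hq
          have i1 := IH p.1 hss1 (b ∩ p.1) Finset.inter_subset_right (hss1.subset.trans hcV)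
          have i2 := IH p.2 hss2 (b ∩ p.2) Finset.inter_subset_right (hss2.subset.trans hcV)
          simp only at h0 i1 i2
          omega

lemma meetF_universal {n : ℕ} (φ₀ φ₁ : Creature n) (χ : Creature n)
    (h0 : χ.Stronger φ₀) (h1 : χ.Stronger φ₁) :
    ∀ b : Finset ℕ, b ⊆ χ.val → χ.f b ≤ meetF φ₀.f φ₁.f b := by
  intro b
  induction b using Finset.strongInduction with
  | _ b IH =>
    intro hb
    rcases meetF_cases φ₀.f φ₁.f b with hc | hc | ⟨p, hp, hc⟩
    · rw [hc]; exact h0.2 b hb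
    · rw [hc]; exact h1.2 b hb
    · obtain ⟨hu, hp1, hp2⟩ := mem_splitSet.1 hp
      have hss1 : p.1 ⊂ b := lt_of_le_of_ne (hu ▸ Finset.subset_union_left) hp1
      have hss2 : p.2 ⊂ b := lt_of_le_of_ne (hu ▸ Finset.subset_union_right) hp2
      rw [hc]
      have hbig := χ.big p.1 p.2 (hss1.subset.trans hb) (hss2.subset.trans hb)
      rw [hu] at hbig
      have i1 := IH p.1 hss1 (hss1.subset.trans hb)
      have i2 := IH p.2 hss2 (hss2.subset.trans hb)
      omega


/-- Meet of creatures: If `φ₀, φ₁` are `i`-creatures with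
`val φ₀ ∩ val φ₁ ≠ ∅`, then there is a weakest creature stronger than both,

with value set `val φ₀ ∩ val φ₁`. -/
theorem creature_meet (n : ℕ) (φ₀ φ₁ : Creature n)
    (h : (φ₀.val ∩ φ₁.val).Nonempty) :
    ∃ ψ : Creature n, ψ.Stronger φ₀ ∧ ψ.Stronger φ₁ ∧
      ψ.val = φ₀.val ∩ φ₁.val ∧
      ∀ χ : Creature n, χ.Stronger φ₀ → χ.Stronger φ₁ → χ.Stronger ψ := by

  classical
  set V := φ₀.val ∩ φ₁.val with hV
  have hVne : V.Nonempty := h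
  have hmono := meetF_mono φ₀ φ₁
  refine ⟨⟨V, meetF φ₀.f φ₁.f, hVne, ?_, ?_, ?_, ?_, ?_⟩, ?_, ?_, rfl, ?_⟩
  · intro x hx
    exact φ₀.val_lt x (Finset.mem_of_mem_inter_left hx)
  · intro b c hbc hcV
    exact hmono c b hbc hcV
  · intro b c hbV hcV
    by_cases hcb : c ⊆ b
    · rw [Finset.union_eq_left.2 hcb]; omega
    · by_cases hbc : b ⊆ c
      · rw [Finset.union_eq_right.2 hbc]; omega
      · have hq : (b, c) ∈ splitSet (b ∪ c) := by
          refine mem_splitSet.2 ⟨rfl, ?_, ?_⟩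
          · intro heq; exact hcb (Finset.union_eq_left.1 heq.symm)
          · intro heq; exact hbc (Finset.union_eq_right.1 heq.symm)
        have := meetF_le_split φ₀.f φ₁.f hq
        simp only at this
        omega
  · have h0 := meetF_le_f0 φ₀.f φ₁.f ∅
    rw [φ₀.f_empty] at h0
    omega
  · intro x hx
    exact le_trans (meetF_le_f0 φ₀.f φ₁.f {x})
      (φ₀.f_singleton x (Finset.mem_of_mem_inter_left hx))
  · exact ⟨Finset.inter_subset_left, fun b _ => meetF_le_f0 _ _ _⟩
  · exact ⟨Finset.inter_subset_right, fun b _ => meetF_le_f1 _ _ _⟩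
  · intro χ hχ0 hχ1
    exact ⟨Finset.subset_inter hχ0.1 hχ1.1, fun b hb =>
      meetF_universal φ₀ φ₁ χ hχ0 hχ1 b hb⟩

end NepPaper
end

section
/- (Decomposition for the meet) Let φ₀, φ₁ be i-creatures with val(φ₀) ∩ val(φ₁) ≠ ∅ and let ψ = φ₀ ∧ φ₁ be their meet. Then for every b ⊆ val(ψ) there exist b₀, b₁ with b = b₀ ∪ b₁ and ψ(b) ≥ max(φ₀(b₀), φ₁(b₁)). -/
namespace NepPaper

/-- The candidate meet creature: `f b = min over b₀ ⊆ b of max (φ₀ b₀) (φ₁ (b \ b₀))`. -/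
noncomputable def meetCand (n : ℕ) (φ₀ φ₁ : Creature n)
    (h : (φ₀.val ∩ φ₁.val).Nonempty) : Creature n where
  val := φ₀.val ∩ φ₁.val
  f := fun b => b.powerset.inf' ⟨b, Finset.mem_powerset_self b⟩
      (fun b₀ => max (φ₀.f b₀) (φ₁.f (b \ b₀)))
  val_nonempty := h
  val_lt := fun x hx => φ₀.val_lt x (Finset.mem_inter.1 hx).1
  mono := by
    intro b c hbc hc
    obtain ⟨c₀, hc₀mem, hc₀⟩ := Finset.exists_mem_eq_inf' ⟨c, Finset.mem_powerset_self c⟩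
      (fun b₀ => max (φ₀.f b₀) (φ₁.f (c \ b₀)))
    rw [hc₀]
    refine le_trans (Finset.inf'_le _ (show c₀ ∩ b ∈ b.powerset from Finset.mem_powerset.2 Finset.inter_subset_right)) ?_
    have hc₀c : c₀ ⊆ c := Finset.mem_powerset.1 hc₀mem
    refine max_le_max ?_ ?_
    · exact φ₀.mono _ _ Finset.inter_subset_left
        (hc₀c.trans (hc.trans Finset.inter_subset_left))
    · refine φ₁.mono _ _ ?_ ((Finset.sdiff_subset).trans (hc.trans Finset.inter_subset_right))
      intro x hx
      rw [Finset.mem_sdiff] at hx ⊢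
      exact ⟨hbc hx.1, fun hxc₀ => hx.2 (Finset.mem_inter.2 ⟨hxc₀, hx.1⟩)⟩
  big := by
    intro b c hb hc
    obtain ⟨b₀, hb₀mem, hb₀⟩ := Finset.exists_mem_eq_inf' ⟨b, Finset.mem_powerset_self b⟩
      (fun b₀ => max (φ₀.f b₀) (φ₁.f (b \ b₀)))
    obtain ⟨c₀, hc₀mem, hc₀⟩ := Finset.exists_mem_eq_inf' ⟨c, Finset.mem_powerset_self c⟩
      (fun b₀ => max (φ₀.f b₀) (φ₁.f (c \ b₀)))
    rw [hb₀, hc₀]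
    have hb₀b : b₀ ⊆ b := Finset.mem_powerset.1 hb₀mem
    have hc₀c : c₀ ⊆ c := Finset.mem_powerset.1 hc₀mem
    have hmem : b₀ ∪ c₀ ∈ (b ∪ c).powerset :=
      Finset.mem_powerset.2 (Finset.union_subset_union hb₀b hc₀c)
    refine le_trans (Finset.inf'_le _ hmem) ?_
    have h1 : φ₀.f (b₀ ∪ c₀) ≤ max (φ₀.f b₀) (φ₀.f c₀) + 1 :=
      φ₀.big _ _ ((hb₀b.trans hb).trans Finset.inter_subset_left)
        ((hc₀c.trans hc).trans Finset.inter_subset_left)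
    have hsub : (b ∪ c) \ (b₀ ∪ c₀) ⊆ (b \ b₀) ∪ (c \ c₀) := by
      intro x hx
      rw [Finset.mem_sdiff, Finset.mem_union, Finset.mem_union] at hx
      rcases hx.1 with hxb | hxc
      · exact Finset.mem_union_left _ (Finset.mem_sdiff.2 ⟨hxb,
          fun hx0 => hx.2 (Or.inl hx0)⟩)
      · exact Finset.mem_union_right _ (Finset.mem_sdiff.2 ⟨hxc,
          fun hx0 => hx.2 (Or.inr hx0)⟩)
    have h2 : φ₁.f ((b ∪ c) \ (b₀ ∪ c₀)) ≤ max (φ₁.f (b \ b₀)) (φ₁.f (c \ c₀)) + 1 := by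
      refine le_trans (φ₁.mono _ _ hsub ?_) (φ₁.big _ _ ?_ ?_)
      · exact Finset.union_subset ((Finset.sdiff_subset).trans
          (hb.trans Finset.inter_subset_right))
          ((Finset.sdiff_subset).trans (hc.trans Finset.inter_subset_right))
      · exact (Finset.sdiff_subset).trans (hb.trans Finset.inter_subset_right)
      · exact (Finset.sdiff_subset).trans (hc.trans Finset.inter_subset_right)
    omega
  f_empty := by simp [φ₀.f_empty, φ₁.f_empty]
  f_singleton := by
    intro x hx
    refine le_trans (Finset.inf'_le _ (Finset.mem_powerset_self {x})) ?_
    simp only [Finset.sdiff_self]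
    exact max_le (φ₀.f_singleton x (Finset.mem_inter.1 hx).1)
      (by simp [φ₁.f_empty])

/-- Decomposition for the meet: If `ψ = φ₀ ∧ φ₁` is the meet
(the weakest common strengthening, with `val ψ = val φ₀ ∩ val φ₁`), then every
`b ⊆ val ψ` decomposes as `b = b₀ ∪ b₁` with
`ψ(b) ≥ max (φ₀(b₀)) (φ₁(b₁))`. -/
theorem creature_meet_decomposition (n : ℕ) (φ₀ φ₁ : Creature n)
    (h : (φ₀.val ∩ φ₁.val).Nonempty)
    (ψ : Creature n) (hψ₀ : ψ.Stronger φ₀) (hψ₁ : ψ.Stronger φ₁)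
    (hval : ψ.val = φ₀.val ∩ φ₁.val)
    (hweakest : ∀ χ : Creature n, χ.Stronger φ₀ → χ.Stronger φ₁ → χ.Stronger ψ) :
    ∀ b : Finset ℕ, b ⊆ ψ.val →
      ∃ b₀ b₁ : Finset ℕ, b = b₀ ∪ b₁ ∧ max (φ₀.f b₀) (φ₁.f b₁) ≤ ψ.f b := by
  intro b hb
  set χ := meetCand n φ₀ φ₁ h with hχ
  have hχ₀ : χ.Stronger φ₀ := by
    constructor
    · exact Finset.inter_subset_left
    · intro c _
      refine le_trans (Finset.inf'_le _ (Finset.mem_powerset_self c)) ?_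
      simp [φ₁.f_empty]
  have hχ₁ : χ.Stronger φ₁ := by
    constructor
    · exact Finset.inter_subset_right
    · intro c _
      refine le_trans (Finset.inf'_le _ (Finset.mem_powerset.2 (Finset.empty_subset c))) ?_
      simp [φ₀.f_empty]
  have hχψ := hweakest χ hχ₀ hχ₁
  have hbχ : b ⊆ χ.val := by
    rw [show χ.val = φ₀.val ∩ φ₁.val from rfl, ← hval]; exact hb
  have hle : χ.f b ≤ ψ.f b := hχψ.2 b hbχ
  obtain ⟨b₀, hb₀mem, hb₀⟩ := Finset.exists_mem_eq_inf' ⟨b, Finset.mem_powerset_self b⟩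
    (fun b₀ => max (φ₀.f b₀) (φ₁.f (b \ b₀)))
  refine ⟨b₀, b \ b₀, ?_, ?_⟩
  · exact (Finset.union_sdiff_of_subset (Finset.mem_powerset.1 hb₀mem)).symm
  · calc max (φ₀.f b₀) (φ₁.f (b \ b₀)) = χ.f b := hb₀.symm
      _ ≤ ψ.f b := hle

end NepPaper
end

section
/- There exists a condition in the creature forcing P: specifically, the sequence p with val(p(n)) = F(n) and p(n)(b) = ⌊log₂(|b|)⌋ for nonempty b (and p(n)(∅) = 0) is a valid condition, i.e., each p(n) is an n-creature and liminf_{n→∞} nor(p(n))^{1/k*_n} = ∞, provided F(i) > 2^{i^{k*_i}} where k*_i = ∏_{j<i} F(j). -/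
namespace NepPaper

theorem log_big (b c : Finset ℕ) :
    Nat.log 2 (b ∪ c).card ≤ max (Nat.log 2 b.card) (Nat.log 2 c.card) + 1 := by
  rcases Nat.eq_zero_or_pos (max b.card c.card) with h | h
  · have hb : b.card = 0 := le_antisymm (le_max_left _ _ |>.trans h.le) (Nat.zero_le _)
    have hc : c.card = 0 := le_antisymm (le_max_right _ _ |>.trans h.le) (Nat.zero_le _)
    have : (b ∪ c).card = 0 := by
      rw [Finset.card_eq_zero] at hb hc ⊢
      simp [hb, hc]
    simp [this]
  · have h1 : (b ∪ c).card ≤ max b.card c.card * 2 := by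
      have := Finset.card_union_le b c
      omega
    calc Nat.log 2 (b ∪ c).card ≤ Nat.log 2 (max b.card c.card * 2) :=
          Nat.log_mono_right h1
      _ = Nat.log 2 (max b.card c.card) + 1 := Nat.log_mul_base one_lt_two h.ne'
      _ = max (Nat.log 2 b.card) (Nat.log 2 c.card) + 1 := by
          rcases max_cases b.card c.card with ⟨h2, h3⟩ | ⟨h2, h3⟩
          · rw [h2, max_eq_left (Nat.log_mono_right h3)]
          · rw [h2, max_eq_right (Nat.log_mono_right h3.le)]

/-- The creature forcing `P` is nonempty: the sequence `p` with
`val (p n) = F n` and `p n (b) = ⌊log₂ |b|⌋` is a valid condition, provided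
`F i > 2 ^ (i ^ k*_i)`. -/
theorem exists_condition (F : ℕ → ℕ)
    (hF : ∀ i : ℕ, 2 ^ (i ^ kstar F i) < F i) :
    ∃ p : ∀ i : ℕ, Creature (F i),
      (∀ n : ℕ, (p n).val = Finset.range (F n)) ∧
      (∀ n : ℕ, ∀ b : Finset ℕ, (p n).f b = Nat.log 2 b.card) ∧
      NormCond F p := by
  have hFpos : ∀ i, 2 ≤ F i := fun i => by
    have := hF i
    have : 1 < F i := lt_of_le_of_lt (Nat.one_le_two_pow) this
    omega
  refine ⟨fun i => {
    val := Finset.range (F i)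
    f := fun b => Nat.log 2 b.card
    val_nonempty := ⟨0, Finset.mem_range.2 (by have := hFpos i; omega)⟩
    val_lt := fun x hx => Finset.mem_range.1 hx
    mono := fun b c hbc _ => Nat.log_mono_right (Finset.card_le_card hbc)
    big := fun b c _ _ => log_big b c
    f_empty := by simp
    f_singleton := fun x _ => by simp }, fun n => rfl, fun n b => rfl, ?_⟩
  intro m
  refine ⟨m + 1, fun i hi => ?_⟩
  have hk : 1 ≤ kstar F i := by
    unfold kstar
    exact Finset.one_le_prod' (fun j _ => by have := hFpos j; omega)
  have hnor : i ^ kstar F i ≤ Nat.log 2 (Finset.range (F i)).card := by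
    rw [Finset.card_range]
    exact Nat.le_log_of_pow_le one_lt_two (hF i).le
  have hmi : m ^ kstar F i < i ^ kstar F i :=
    Nat.pow_lt_pow_left (by omega) (by omega)
  exact lt_of_lt_of_le hmi hnor


end NepPaper
end
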